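/- (Theorem 1, second regime, case c1 > 2c2.) Assume c1 > 2c2. Then for every r with c2t < r ≤ (c1 − c2)t, the distribution function Φ(r) = P(ρ < r) equals H1(r,t) = 1 − e^{−(λ1+λ2)t}·exp((λ1/c1)√(c1²t² − (r − c2t)²)) + (λ1 e^{−(λ1+λ2)t}/(π c1))·∫_{r−c2t}^{r+c2t} arccos((ξ² + (c2t)² − r²)/(2c2t·ξ))·ξ·(c1²t² − ξ²)^{−1/2}·exp((λ1/c1)√(c1²t² − ξ²)) dξ − (λ2 e^{−(λ1+λ2)t}/c2)·∫₀^{c2t} ζ·(c2²t² − ζ²)^{−1/2}·exp((λ2/c2)√(c2²t² − ζ²))·exp((λ1/c1)√(c1²t² − (r−ζ)²)) dζ + (1/π)·∫₀^{c2t} f2(ζ)·[∫_{r−ζ}^{r+ζ} arccos((ξ² + ζ² − r²)/(2ξζ))·f1(ξ) dξ] dζ. -/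

import Mathlib

open MeasureTheory ProbabilityTheory
open scoped ENNReal

/-- Density of the absolutely continuous part of the law of the distance from
the origin of a planar Markov random flight with speed `c` and rate `lam` at time `t`. -/
noncomputable def fac (t lam c z : ℝ) : ℝ :=
  if 0 < z ∧ z < c * t then
    (lam / c) * z / Real.sqrt (c ^ 2 * t ^ 2 - z ^ 2) *
      Real.exp (-(lam * t) + (lam / c) * Real.sqrt (c ^ 2 * t ^ 2 - z ^ 2))
  else 0

/-- The law of the distance from the origin of a planar Markov random flight:
singular part `e^{-λt}·δ_{ct}` plus absolutely continuous part with density `fac`. -/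
noncomputable def flightLaw (t lam c : ℝ) : Measure ℝ :=
  ENNReal.ofReal (Real.exp (-(lam * t))) • Measure.dirac (c * t) +
    volume.withDensity fun z => ENNReal.ofReal (fac t lam c z)

/-- The uniform probability measure on a set `s ⊆ ℝ`. -/
noncomputable def uniformMeasure (s : Set ℝ) : Measure ℝ :=
  (volume s)⁻¹ • volume.restrict s

/-- The Euclidean distance between the two flights, expressed through the radii
`R1, R2` and the angle `Θ` via the law of cosines. -/
noncomputable def rho {Ω : Type*} (R1 R2 Θ : Ω → ℝ) (ω : Ω) : ℝ :=
  Real.sqrt (R1 ω ^ 2 + R2 ω ^ 2 - 2 * R1 ω * R2 ω * Real.cos (Θ ω))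

noncomputable def facG (t lam c x : ℝ) : ℝ :=
  -Real.exp (-(lam * t) + (lam / c) * Real.sqrt (c ^ 2 * t ^ 2 - x ^ 2))

lemma fac_nonneg {t lam c : ℝ} (ht : 0 < t) (hl : 0 < lam) (hc : 0 < c) (z : ℝ) :
    0 ≤ fac t lam c z := by
  unfold fac
  split_ifs with h
  · exact mul_nonneg (div_nonneg (mul_nonneg (div_nonneg hl.le hc.le) h.1.le)
      (Real.sqrt_nonneg _)) (Real.exp_pos _).le
  · exact le_refl 0

lemma fac_eq_zero_of_not_mem {t lam c z : ℝ} (h : z ∉ Set.Ioo 0 (c * t)) :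
    fac t lam c z = 0 := by
  unfold fac
  rw [if_neg]
  simpa [Set.mem_Ioo] using h

lemma measurable_fac (t lam c : ℝ) : Measurable (fac t lam c) := by
  unfold fac
  apply Measurable.ite
  · exact measurableSet_lt measurable_const measurable_id |>.inter
      (measurableSet_lt measurable_id measurable_const)
  · fun_prop
  · exact measurable_const

lemma facG_cont (t lam c : ℝ) : Continuous (facG t lam c) := by
  unfold facG
  fun_prop

lemma facG_hasDerivAt {t lam c : ℝ} (ht : 0 < t) (hc : 0 < c) :
    ∀ x ∈ Set.Ioo 0 (c * t), HasDerivAt (facG t lam c) (fac t lam c x) x := by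
  intro x hx
  obtain ⟨hx0, hxct⟩ := hx
  have hpos : 0 < c ^ 2 * t ^ 2 - x ^ 2 := by nlinarith
  have hs : Real.sqrt (c ^ 2 * t ^ 2 - x ^ 2) ≠ 0 := by positivity
  have h1 : HasDerivAt (fun x : ℝ => c ^ 2 * t ^ 2 - x ^ 2) (-(2 * x)) x := by
    simpa using ((hasDerivAt_pow 2 x).const_sub (c ^ 2 * t ^ 2))
  have h2 : HasDerivAt (fun x : ℝ => Real.sqrt (c ^ 2 * t ^ 2 - x ^ 2))
      (1 / (2 * Real.sqrt (c ^ 2 * t ^ 2 - x ^ 2)) * -(2 * x)) x :=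
    (Real.hasDerivAt_sqrt hpos.ne').comp x h1
  have h3 : HasDerivAt (fun x : ℝ => -(lam * t) + (lam / c) * Real.sqrt (c ^ 2 * t ^ 2 - x ^ 2))
      ((lam / c) * (1 / (2 * Real.sqrt (c ^ 2 * t ^ 2 - x ^ 2)) * -(2 * x))) x :=
    ((h2.const_mul (lam / c)).const_add (-(lam * t)))
  have h4 := (Real.hasDerivAt_exp _).comp x h3
  have h5 := h4.neg
  refine h5.congr_deriv ?_
  unfold fac
  rw [if_pos ⟨hx0, hxct⟩]
  field_simp

lemma fac_integrableOn {t lam c : ℝ} (ht : 0 < t) (hl : 0 < lam) (hc : 0 < c) :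
    IntegrableOn (fac t lam c) (Set.Ioc 0 (c * t)) := by
  refine intervalIntegral.integrableOn_deriv_of_nonneg ((facG_cont t lam c).continuousOn)
    (facG_hasDerivAt ht hc) ?_
  intro x _
  exact fac_nonneg ht hl hc x

lemma fac_integrable {t lam c : ℝ} (ht : 0 < t) (hl : 0 < lam) (hc : 0 < c) :
    Integrable (fac t lam c) := by
  have h : fac t lam c = Set.indicator (Set.Ioc 0 (c * t)) (fac t lam c) := by
    ext z
    by_cases hz : z ∈ Set.Ioc 0 (c * t)
    · rw [Set.indicator_of_mem hz]
    · rw [Set.indicator_of_notMem hz, fac_eq_zero_of_not_mem]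
      intro hz'
      exact hz ⟨hz'.1, hz'.2.le⟩
  rw [h, integrable_indicator_iff measurableSet_Ioc]
  exact fac_integrableOn ht hl hc

lemma fac_intervalIntegrable {t lam c : ℝ} (ht : 0 < t) (hl : 0 < lam) (hc : 0 < c)
    (a b : ℝ) : IntervalIntegrable (fac t lam c) volume a b :=
  (fac_integrable ht hl hc).intervalIntegrable

lemma fac_integral_eq {t lam c x : ℝ} (ht : 0 < t) (hl : 0 < lam) (hc : 0 < c)
    (hx0 : 0 ≤ x) (hx : x ≤ c * t) :
    ∫ ξ in (0:ℝ)..x, fac t lam c ξ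
      = 1 - Real.exp (-(lam * t) + (lam / c) * Real.sqrt (c ^ 2 * t ^ 2 - x ^ 2)) := by
  have h := intervalIntegral.integral_eq_sub_of_hasDerivAt_of_le hx0
    ((facG_cont t lam c).continuousOn)
    (fun y hy => facG_hasDerivAt ht hc y ⟨hy.1, lt_of_lt_of_le hy.2 hx⟩)
    (fac_intervalIntegrable ht hl hc 0 x)
  rw [h]
  unfold facG
  have h0 : Real.sqrt (c ^ 2 * t ^ 2 - 0 ^ 2) = c * t := by
    rw [show c ^ 2 * t ^ 2 - 0 ^ 2 = (c * t) ^ 2 by ring, Real.sqrt_sq (by positivity)]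
  rw [h0]
  have h1 : lam / c * (c * t) = lam * t := by
    field_simp
  rw [h1]
  simp [Real.exp_zero]
  ring

lemma cos_set_eq (v : ℝ) :
    {θ : ℝ | v < Real.cos θ} ∩ Set.Ioo 0 Real.pi = Set.Ioo 0 (Real.arccos v) := by
  rcases lt_or_ge v (-1) with hv | hv
  · rw [Real.arccos_eq_pi.mpr hv.le]
    ext θ
    simp only [Set.mem_inter_iff, Set.mem_setOf_eq, Set.mem_Ioo]
    exact ⟨fun h => h.2, fun h => ⟨lt_of_lt_of_le hv (Real.neg_one_le_cos θ), h⟩⟩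
  · rcases le_or_gt v 1 with hv1 | hv1
    · ext θ
      simp only [Set.mem_inter_iff, Set.mem_setOf_eq, Set.mem_Ioo]
      constructor
      · rintro ⟨hc, h0, hpi⟩
        refine ⟨h0, ?_⟩
        have := Real.strictAntiOn_cos.lt_iff_gt
          (a := Real.arccos v) (b := θ)
          ⟨Real.arccos_nonneg v, Real.arccos_le_pi v⟩ ⟨h0.le, hpi.le⟩
        rw [Real.cos_arccos hv hv1] at this
        exact this.mp hc
      · rintro ⟨h0, hav⟩
        have hpi : θ < Real.pi := lt_of_lt_of_le hav (Real.arccos_le_pi v)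
        refine ⟨?_, h0, hpi⟩
        have := Real.strictAntiOn_cos.lt_iff_gt
          (a := Real.arccos v) (b := θ)
          ⟨Real.arccos_nonneg v, Real.arccos_le_pi v⟩ ⟨h0.le, hpi.le⟩
        rw [Real.cos_arccos hv hv1] at this
        exact this.mpr hav
    · rw [Real.arccos_eq_zero.mpr hv1.le]
      ext θ
      simp only [Set.mem_inter_iff, Set.mem_setOf_eq, Set.mem_Ioo]
      constructor
      · rintro ⟨hc, _, _⟩
        exact absurd (lt_trans hv1 hc) (not_lt.mpr (Real.cos_le_one θ))
      · rintro ⟨h0, h1⟩; exact absurd h1 (not_lt.mpr h0.le)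

lemma uniform_cos_measure (v : ℝ) :
    uniformMeasure (Set.Ioo 0 Real.pi) {θ : ℝ | v < Real.cos θ}
      = ENNReal.ofReal (Real.arccos v / Real.pi) := by
  unfold uniformMeasure
  rw [Measure.smul_apply, Measure.restrict_apply (by
    exact measurableSet_lt measurable_const (by fun_prop))]
  rw [cos_set_eq, Real.volume_Ioo, Real.volume_Ioo, sub_zero, sub_zero, smul_eq_mul]
  rw [← ENNReal.ofReal_inv_of_pos Real.pi_pos, ← ENNReal.ofReal_mul (by positivity)]
  congr 1
  rw [inv_mul_eq_div]

lemma theta_prob {x y r : ℝ} (hx : 0 < x) (hy : 0 < y) (hr : 0 < r) :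
    uniformMeasure (Set.Ioo 0 Real.pi)
        {θ : ℝ | Real.sqrt (x ^ 2 + y ^ 2 - 2 * x * y * Real.cos θ) < r}
      = ENNReal.ofReal (Real.arccos ((x ^ 2 + y ^ 2 - r ^ 2) / (2 * x * y)) / Real.pi) := by
  have hset : {θ : ℝ | Real.sqrt (x ^ 2 + y ^ 2 - 2 * x * y * Real.cos θ) < r}
      = {θ : ℝ | (x ^ 2 + y ^ 2 - r ^ 2) / (2 * x * y) < Real.cos θ} := by
    ext θ
    simp only [Set.mem_setOf_eq]
    rw [Real.sqrt_lt' hr, div_lt_iff₀ (by positivity)]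
    constructor <;> intro h <;> nlinarith
  rw [hset, uniform_cos_measure]

lemma flightLaw_lintegral {t lam c : ℝ} (g : ℝ → ℝ≥0∞) (hg : Measurable g) :
    ∫⁻ x, g x ∂(flightLaw t lam c)
      = ENNReal.ofReal (Real.exp (-(lam * t))) * g (c * t)
        + ∫⁻ x, ENNReal.ofReal (fac t lam c x) * g x := by
  unfold flightLaw
  rw [lintegral_add_measure, lintegral_smul_measure, lintegral_dirac' _ hg,
    lintegral_withDensity_eq_lintegral_mul _ (by
      exact (measurable_fac t lam c).ennreal_ofReal) hg]
  rfl

instance flightLaw_sfinite (t lam c : ℝ) : SFinite (flightLaw t lam c) := by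
  unfold flightLaw
  infer_instance

noncomputable def pfun (r ξ y : ℝ) : ℝ :=
  Real.arccos ((ξ ^ 2 + y ^ 2 - r ^ 2) / (2 * ξ * y)) / Real.pi

lemma pfun_nonneg (r ξ y : ℝ) : 0 ≤ pfun r ξ y :=
  div_nonneg (Real.arccos_nonneg _) Real.pi_pos.le

lemma pfun_le_one (r ξ y : ℝ) : pfun r ξ y ≤ 1 := by
  rw [pfun, div_le_one Real.pi_pos]
  exact Real.arccos_le_pi _

lemma pfun_measurable (r : ℝ) : Measurable (fun p : ℝ × ℝ => pfun r p.1 p.2) := by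
  unfold pfun
  apply Measurable.div_const
  exact Real.continuous_arccos.measurable.comp (by fun_prop)

lemma pfun_measurable_left (r y : ℝ) : Measurable (fun ξ => pfun r ξ y) := by
  unfold pfun
  apply Measurable.div_const
  exact Real.continuous_arccos.measurable.comp (by fun_prop)

noncomputable def Jfun (t l1 c1 r y : ℝ) : ℝ :=
  ∫ ξ, fac t l1 c1 ξ * pfun r ξ y

lemma Jfun_integrand_integrable {t l1 c1 : ℝ} (ht : 0 < t) (hl : 0 < l1) (hc : 0 < c1)
    (r y : ℝ) : Integrable (fun ξ => pfun r ξ y * fac t l1 c1 ξ) := by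
  refine (fac_integrable ht hl hc).bdd_mul
    ((pfun_measurable_left r y).aestronglyMeasurable) (c := 1) (Filter.Eventually.of_forall fun ξ => ?_)
  rw [Real.norm_eq_abs, abs_of_nonneg (pfun_nonneg r ξ y)]
  exact pfun_le_one r ξ y

lemma Jfun_integrable {t l1 c1 : ℝ} (ht : 0 < t) (hl : 0 < l1) (hc : 0 < c1)
    (r y : ℝ) : Integrable (fun ξ => fac t l1 c1 ξ * pfun r ξ y) := by
  simpa [mul_comm] using Jfun_integrand_integrable ht hl hc r y

lemma Jfun_nonneg {t l1 c1 : ℝ} (ht : 0 < t) (hl : 0 < l1) (hc : 0 < c1) (r y : ℝ) :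
    0 ≤ Jfun t l1 c1 r y :=
  integral_nonneg fun ξ => mul_nonneg (fac_nonneg ht hl hc ξ) (pfun_nonneg r ξ y)

lemma Jfun_le {t l1 c1 : ℝ} (ht : 0 < t) (hl : 0 < l1) (hc : 0 < c1) (r y : ℝ) :
    Jfun t l1 c1 r y ≤ ∫ ξ, fac t l1 c1 ξ := by
  apply integral_mono (Jfun_integrable ht hl hc r y) (fac_integrable ht hl hc)
  intro ξ
  calc fac t l1 c1 ξ * pfun r ξ y ≤ fac t l1 c1 ξ * 1 :=
        mul_le_mul_of_nonneg_left (pfun_le_one r ξ y) (fac_nonneg ht hl hc ξ)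
    _ = fac t l1 c1 ξ := mul_one _

set_option maxHeartbeats 1000000 in
lemma Jfun_stronglyMeasurable (t l1 c1 r : ℝ) :
    StronglyMeasurable (Jfun t l1 c1 r) := by
  have h : StronglyMeasurable (fun p : ℝ × ℝ => fac t l1 c1 p.2 * pfun r p.2 p.1) := by
    apply Measurable.stronglyMeasurable
    refine ((measurable_fac t l1 c1).comp measurable_snd).mul ?_
    unfold pfun
    apply Measurable.div_const
    exact Real.continuous_arccos.measurable.comp (by fun_prop)
  exact h.integral_prod_right' (ν := volume)

lemma lint_J {t l1 c1 : ℝ} (ht : 0 < t) (hl : 0 < l1) (hc : 0 < c1)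
    {r : ℝ} (hr : 0 < r) {y : ℝ} (hy : 0 < y) :
    ∫⁻ ξ, ENNReal.ofReal (fac t l1 c1 ξ) *
        uniformMeasure (Set.Ioo 0 Real.pi)
          {θ : ℝ | Real.sqrt (ξ ^ 2 + y ^ 2 - 2 * ξ * y * Real.cos θ) < r}
      = ENNReal.ofReal (Jfun t l1 c1 r y) := by
  have hpt : ∀ ξ : ℝ, ENNReal.ofReal (fac t l1 c1 ξ) *
      uniformMeasure (Set.Ioo 0 Real.pi)
        {θ : ℝ | Real.sqrt (ξ ^ 2 + y ^ 2 - 2 * ξ * y * Real.cos θ) < r}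
      = ENNReal.ofReal (fac t l1 c1 ξ * pfun r ξ y) := by
    intro ξ
    by_cases hξ : fac t l1 c1 ξ = 0
    · simp [hξ]
    · have hmem : ξ ∈ Set.Ioo 0 (c1 * t) := by
        by_contra hn
        exact hξ (fac_eq_zero_of_not_mem hn)
      rw [theta_prob hmem.1 hy hr, ENNReal.ofReal_mul (fac_nonneg ht hl hc ξ)]
      rfl
  simp_rw [hpt]
  rw [← ofReal_integral_eq_lintegral_ofReal (Jfun_integrable ht hl hc r y)
    (Filter.Eventually.of_forall fun ξ =>
      mul_nonneg (fac_nonneg ht hl hc ξ) (pfun_nonneg r ξ y))]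
  rfl

lemma Jfun_eq {t l1 c1 c2 r : ℝ} (ht : 0 < t) (hl1 : 0 < l1) (hc1 : 0 < c1) (hc2 : 0 < c2)
    (hr0 : c2 * t < r) (hr : r ≤ (c1 - c2) * t) {y : ℝ} (hy0 : 0 < y) (hy : y ≤ c2 * t) :
    Jfun t l1 c1 r y
      = 1 - Real.exp (-(l1 * t) + (l1 / c1) * Real.sqrt (c1 ^ 2 * t ^ 2 - (r - y) ^ 2))
        + ∫ ξ in (r - y)..(r + y), fac t l1 c1 ξ * pfun r ξ y := by
  have hyr : y < r := lt_of_le_of_lt hy hr0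
  have hry0 : 0 < r - y := by linarith
  have hryc : r + y ≤ c1 * t := by nlinarith
  have hr0' : (0:ℝ) < r := lt_trans (by positivity) hr0
  have hryc' : r - y < c1 * t := by nlinarith
  have hind : (fun ξ => fac t l1 c1 ξ * pfun r ξ y)
      = Set.indicator (Set.Ioc 0 (c1 * t)) (fun ξ => fac t l1 c1 ξ * pfun r ξ y) := by
    ext ξ
    by_cases hz : ξ ∈ Set.Ioc 0 (c1 * t)
    · rw [Set.indicator_of_mem hz]
    · rw [Set.indicator_of_notMem hz, fac_eq_zero_of_not_mem, zero_mul]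
      intro hz'; exact hz ⟨hz'.1, hz'.2.le⟩
  have h1 : Jfun t l1 c1 r y = ∫ ξ in (0:ℝ)..(c1 * t), fac t l1 c1 ξ * pfun r ξ y := by
    rw [Jfun]
    nth_rewrite 1 [hind]
    rw [integral_indicator measurableSet_Ioc,
      intervalIntegral.integral_of_le (by positivity : (0:ℝ) ≤ c1 * t)]
  have hii : ∀ a b : ℝ, IntervalIntegrable (fun ξ => fac t l1 c1 ξ * pfun r ξ y) volume a b :=
    fun a b => (Jfun_integrable ht hl1 hc1 r y).intervalIntegrable
  have hsplit : ∫ ξ in (0:ℝ)..(c1 * t), fac t l1 c1 ξ * pfun r ξ y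
      = (∫ ξ in (0:ℝ)..(r - y), fac t l1 c1 ξ * pfun r ξ y)
        + (∫ ξ in (r - y)..(r + y), fac t l1 c1 ξ * pfun r ξ y)
        + (∫ ξ in (r + y)..(c1 * t), fac t l1 c1 ξ * pfun r ξ y) := by
    rw [intervalIntegral.integral_add_adjacent_intervals (hii 0 (r - y))
      (hii (r - y) (r + y)),
      intervalIntegral.integral_add_adjacent_intervals (hii 0 (r + y))
      (hii (r + y) (c1 * t))]
  have hpiece1 : ∫ ξ in (0:ℝ)..(r - y), fac t l1 c1 ξ * pfun r ξ y
      = 1 - Real.exp (-(l1 * t) + (l1 / c1) * Real.sqrt (c1 ^ 2 * t ^ 2 - (r - y) ^ 2)) := by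
    rw [← fac_integral_eq ht hl1 hc1 hry0.le (by linarith)]
    apply intervalIntegral.integral_congr
    intro ξ hξ
    rw [Set.uIcc_of_le hry0.le] at hξ
    obtain ⟨hξ0, hξ1⟩ := hξ
    show fac t l1 c1 ξ * pfun r ξ y = fac t l1 c1 ξ
    rcases eq_or_lt_of_le hξ0 with h0 | h0
    · rw [← h0]
      have hz : fac t l1 c1 0 = 0 := fac_eq_zero_of_not_mem (by simp)
      simp [hz]
    · have hp : pfun r ξ y = 1 := by
        rw [pfun, Real.arccos_eq_pi.mpr, div_self Real.pi_ne_zero]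
        rw [div_le_iff₀ (by positivity : (0:ℝ) < 2 * ξ * y)]
        nlinarith
      rw [hp, mul_one]
  have hpiece3 : ∫ ξ in (r + y)..(c1 * t), fac t l1 c1 ξ * pfun r ξ y = 0 := by
    have hz : ∀ ξ ∈ Set.uIcc (r + y) (c1 * t),
        fac t l1 c1 ξ * pfun r ξ y = (fun _ : ℝ => (0:ℝ)) ξ := by
      intro ξ hξ
      rw [Set.uIcc_of_le hryc] at hξ
      obtain ⟨hξ0, hξ1⟩ := hξ
      have hξpos : 0 < ξ := lt_of_lt_of_le (by linarith) hξ0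
      show fac t l1 c1 ξ * pfun r ξ y = 0
      have hp : pfun r ξ y = 0 := by
        rw [pfun, Real.arccos_eq_zero.mpr, zero_div]
        rw [le_div_iff₀ (by positivity : (0:ℝ) < 2 * ξ * y)]
        nlinarith
      rw [hp, mul_zero]
    rw [intervalIntegral.integral_congr hz, intervalIntegral.integral_zero]
  rw [h1, hsplit, hpiece1, hpiece3, add_zero]

lemma sqrt_term_le {c t : ℝ} (hc : 0 ≤ c) (ht : 0 ≤ t) (x : ℝ) :
    Real.sqrt (c ^ 2 * t ^ 2 - x ^ 2) ≤ c * t := by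
  calc Real.sqrt (c ^ 2 * t ^ 2 - x ^ 2) ≤ Real.sqrt (c ^ 2 * t ^ 2) :=
        Real.sqrt_le_sqrt (by nlinarith)
    _ = c * t := by
        rw [show c ^ 2 * t ^ 2 = (c * t) ^ 2 by ring, Real.sqrt_sq (by positivity)]

lemma expo_le_one {l c t : ℝ} (hl : 0 < l) (hc : 0 < c) (ht : 0 ≤ t) (x : ℝ) :
    Real.exp (-(l * t) + (l / c) * Real.sqrt (c ^ 2 * t ^ 2 - x ^ 2)) ≤ 1 := by
  rw [Real.exp_le_one_iff]
  have h1 : (l / c) * Real.sqrt (c ^ 2 * t ^ 2 - x ^ 2) ≤ (l / c) * (c * t) :=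
    mul_le_mul_of_nonneg_left (sqrt_term_le hc.le ht x) (by positivity)
  have h2 : (l / c) * (c * t) = l * t := by field_simp
  linarith

lemma facJ_integrable {t l1 l2 c1 c2 r : ℝ} (ht : 0 < t) (hl1 : 0 < l1) (hl2 : 0 < l2)
    (hc1 : 0 < c1) (hc2 : 0 < c2) :
    Integrable (fun ζ => fac t l2 c2 ζ * Jfun t l1 c1 r ζ) := by
  have hb : ∀ y : ℝ, ‖Jfun t l1 c1 r y‖ ≤ ∫ ξ, fac t l1 c1 ξ := by
    intro y
    rw [Real.norm_eq_abs, abs_of_nonneg (Jfun_nonneg ht hl1 hc1 r y)]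
    exact Jfun_le ht hl1 hc1 r y
  have h := (fac_integrable ht hl2 hc2).bdd_mul
    (Jfun_stronglyMeasurable t l1 c1 r).measurable.aestronglyMeasurable
    (Filter.Eventually.of_forall hb)
  apply h.congr
  filter_upwards with ζ using mul_comm _ _

lemma key_real (t l1 l2 c1 c2 r : ℝ) (ht : 0 < t) (hl1 : 0 < l1) (hl2 : 0 < l2)
    (hc2 : 0 < c2) (hc12 : c2 ≤ c1) (hr0 : c2 * t < r) (hr : r ≤ (c1 - c2) * t) :
    Real.exp (-(l2 * t)) * Jfun t l1 c1 r (c2 * t)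
        + (∫ ζ, fac t l2 c2 ζ * Jfun t l1 c1 r ζ)
      = 1 - Real.exp (-((l1 + l2) * t)) * Real.exp ((l1 / c1) * Real.sqrt (c1 ^ 2 * t ^ 2 - (r - c2 * t) ^ 2))
        + l1 * Real.exp (-((l1 + l2) * t)) / (Real.pi * c1) *
          (∫ ξ in (r - c2 * t)..(r + c2 * t),
            Real.arccos ((ξ ^ 2 + (c2 * t) ^ 2 - r ^ 2) / (2 * (c2 * t) * ξ)) *
              (ξ / Real.sqrt (c1 ^ 2 * t ^ 2 - ξ ^ 2)) *
              Real.exp ((l1 / c1) * Real.sqrt (c1 ^ 2 * t ^ 2 - ξ ^ 2)))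
        - l2 * Real.exp (-((l1 + l2) * t)) / c2 *
          (∫ ζ in (0:ℝ)..(c2 * t),
            ζ / Real.sqrt (c2 ^ 2 * t ^ 2 - ζ ^ 2) *
              Real.exp ((l2 / c2) * Real.sqrt (c2 ^ 2 * t ^ 2 - ζ ^ 2)) *
              Real.exp ((l1 / c1) * Real.sqrt (c1 ^ 2 * t ^ 2 - (r - ζ) ^ 2)))
        + (1 / Real.pi) *
          (∫ ζ in (0:ℝ)..(c2 * t), fac t l2 c2 ζ *
            ∫ ξ in (r - ζ)..(r + ζ),
              Real.arccos ((ξ ^ 2 + ζ ^ 2 - r ^ 2) / (2 * ξ * ζ)) * fac t l1 c1 ξ) := by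
  have hc1 : 0 < c1 := lt_of_lt_of_le hc2 hc12
  have hct2 : 0 < c2 * t := by positivity
  -- abbreviations
  set A := Real.sqrt (c1 ^ 2 * t ^ 2 - (r - c2 * t) ^ 2) with hA
  set I2 := ∫ ξ in (r - c2 * t)..(r + c2 * t),
      Real.arccos ((ξ ^ 2 + (c2 * t) ^ 2 - r ^ 2) / (2 * (c2 * t) * ξ)) *
        (ξ / Real.sqrt (c1 ^ 2 * t ^ 2 - ξ ^ 2)) *
        Real.exp ((l1 / c1) * Real.sqrt (c1 ^ 2 * t ^ 2 - ξ ^ 2)) with hI2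
  set I3 := ∫ ζ in (0:ℝ)..(c2 * t),
      ζ / Real.sqrt (c2 ^ 2 * t ^ 2 - ζ ^ 2) *
        Real.exp ((l2 / c2) * Real.sqrt (c2 ^ 2 * t ^ 2 - ζ ^ 2)) *
        Real.exp ((l1 / c1) * Real.sqrt (c1 ^ 2 * t ^ 2 - (r - ζ) ^ 2)) with hI3
  set I4 := ∫ ζ in (0:ℝ)..(c2 * t), fac t l2 c2 ζ *
      ∫ ξ in (r - ζ)..(r + ζ),
        Real.arccos ((ξ ^ 2 + ζ ^ 2 - r ^ 2) / (2 * ξ * ζ)) * fac t l1 c1 ξ with hI4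
  -- Step 1: J at c2 t
  have hJct : Jfun t l1 c1 r (c2 * t)
      = 1 - Real.exp (-(l1 * t) + (l1 / c1) * A)
        + (l1 * Real.exp (-(l1 * t)) / (c1 * Real.pi)) * I2 := by
    rw [Jfun_eq ht hl1 hc1 hc2 hr0 hr hct2 le_rfl]
    congr 1
    -- the middle interval integral
    have hcongr : ∀ ξ ∈ Set.uIcc (r - c2 * t) (r + c2 * t),
        fac t l1 c1 ξ * pfun r ξ (c2 * t)
          = (l1 * Real.exp (-(l1 * t)) / (c1 * Real.pi)) *
            (Real.arccos ((ξ ^ 2 + (c2 * t) ^ 2 - r ^ 2) / (2 * (c2 * t) * ξ)) *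
              (ξ / Real.sqrt (c1 ^ 2 * t ^ 2 - ξ ^ 2)) *
              Real.exp ((l1 / c1) * Real.sqrt (c1 ^ 2 * t ^ 2 - ξ ^ 2))) := by
      intro ξ hξ
      rw [Set.uIcc_of_le (by linarith)] at hξ
      obtain ⟨hξ0, hξ1⟩ := hξ
      have hξpos : 0 < ξ := lt_of_lt_of_le (by linarith) hξ0
      have harg : (2:ℝ) * (c2 * t) * ξ = 2 * ξ * (c2 * t) := by ring
      rw [harg, pfun]
      rcases lt_or_ge ξ (c1 * t) with hlt | hge
      · rw [fac, if_pos ⟨hξpos, hlt⟩, Real.exp_add]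
        ring
      · have h1 : fac t l1 c1 ξ = 0 := fac_eq_zero_of_not_mem (by
          simp only [Set.mem_Ioo, not_and, not_lt]; intro _; exact hge)
        have h2 : ξ = c1 * t := le_antisymm (by nlinarith) hge
        have h3 : Real.sqrt (c1 ^ 2 * t ^ 2 - ξ ^ 2) = 0 := by
          rw [h2, show c1 ^ 2 * t ^ 2 - (c1 * t) ^ 2 = 0 by ring, Real.sqrt_zero]
        simp [h1, h3]
    rw [intervalIntegral.integral_congr hcongr, intervalIntegral.integral_const_mul]
  -- Step 2: the density integral
  set s2 : Set ℝ := Set.Ioc 0 (c2 * t) with hs2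
  set E2 : ℝ → ℝ := fun ζ =>
    Real.exp (-(l1 * t) + (l1 / c1) * Real.sqrt (c1 ^ 2 * t ^ 2 - (r - ζ) ^ 2)) with hE2
  set v : ℝ → ℝ := fun ζ => ∫ ξ in (r - ζ)..(r + ζ), fac t l1 c1 ξ * pfun r ξ ζ with hv
  have hE2cont : Continuous E2 := by
    rw [hE2]; fun_prop
  have hE2bd : ∀ ζ : ℝ, ‖E2 ζ‖ ≤ 1 := by
    intro ζ
    rw [Real.norm_eq_abs, abs_of_pos (Real.exp_pos _)]
    exact expo_le_one hl1 hc1 ht.le (r - ζ)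
  have hIf2 : IntegrableOn (fac t l2 c2) s2 := fac_integrableOn ht hl2 hc2
  have hIE : Integrable (fun ζ => fac t l2 c2 ζ * E2 ζ) (volume.restrict s2) := by
    have := hIf2.bdd_mul (f := E2) hE2cont.aestronglyMeasurable (Filter.Eventually.of_forall hE2bd)
    apply this.congr
    filter_upwards with ζ using mul_comm _ _
  have hIJglob : Integrable (fun ζ => fac t l2 c2 ζ * Jfun t l1 c1 r ζ) := by
    have hb : ∀ y : ℝ, ‖Jfun t l1 c1 r y‖ ≤ ∫ ξ, fac t l1 c1 ξ := by
      intro y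
      rw [Real.norm_eq_abs, abs_of_nonneg (Jfun_nonneg ht hl1 hc1 r y)]
      exact Jfun_le ht hl1 hc1 r y
    have := (fac_integrable ht hl2 hc2).bdd_mul
      (Jfun_stronglyMeasurable t l1 c1 r).measurable.aestronglyMeasurable
      (Filter.Eventually.of_forall hb)
    apply this.congr
    filter_upwards with ζ using mul_comm _ _
  have hIJ : Integrable (fun ζ => fac t l2 c2 ζ * Jfun t l1 c1 r ζ) (volume.restrict s2) :=
    hIJglob.integrableOn
  have hIu : Integrable (fun ζ => fac t l2 c2 ζ * (1 - E2 ζ)) (volume.restrict s2) := by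
    have : (fun ζ => fac t l2 c2 ζ * (1 - E2 ζ))
        = fun ζ => fac t l2 c2 ζ - fac t l2 c2 ζ * E2 ζ := by
      funext ζ; ring
    rw [this]
    exact hIf2.sub hIE
  have hsplitJ : ∀ ζ ∈ s2, fac t l2 c2 ζ * Jfun t l1 c1 r ζ
      = fac t l2 c2 ζ * (1 - E2 ζ) + fac t l2 c2 ζ * v ζ := by
    intro ζ hζ
    rw [Jfun_eq ht hl1 hc1 hc2 hr0 hr hζ.1 hζ.2]
    rw [hE2, hv]
    ring
  have haeJ : (fun ζ => fac t l2 c2 ζ * Jfun t l1 c1 r ζ)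
      =ᵐ[volume.restrict s2]
      (fun ζ => fac t l2 c2 ζ * (1 - E2 ζ) + fac t l2 c2 ζ * v ζ) := by
    filter_upwards [self_mem_ae_restrict (measurableSet_Ioc : MeasurableSet s2)] with ζ hζ
    exact hsplitJ ζ hζ
  have hIv : Integrable (fun ζ => fac t l2 c2 ζ * v ζ) (volume.restrict s2) := by
    have hae : (fun ζ => fac t l2 c2 ζ * v ζ)
        =ᵐ[volume.restrict s2]
        (fun ζ => fac t l2 c2 ζ * Jfun t l1 c1 r ζ - fac t l2 c2 ζ * (1 - E2 ζ)) := by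
      filter_upwards [self_mem_ae_restrict (measurableSet_Ioc : MeasurableSet s2)] with ζ hζ
      rw [hsplitJ ζ hζ]; ring
    exact (hIJ.sub hIu).congr hae.symm
  -- reduce the full-line integral to s2
  have hres : (∫ ζ, fac t l2 c2 ζ * Jfun t l1 c1 r ζ)
      = ∫ ζ in s2, fac t l2 c2 ζ * Jfun t l1 c1 r ζ := by
    rw [← integral_indicator (measurableSet_Ioc : MeasurableSet s2)]
    congr 1
    funext ζ
    by_cases hζ : ζ ∈ s2
    · rw [Set.indicator_of_mem hζ]
    · rw [Set.indicator_of_notMem hζ, fac_eq_zero_of_not_mem, zero_mul]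
      intro hz'; exact hζ ⟨hz'.1, hz'.2.le⟩
  have hsum : (∫ ζ in s2, fac t l2 c2 ζ * Jfun t l1 c1 r ζ)
      = (∫ ζ in s2, fac t l2 c2 ζ * (1 - E2 ζ)) + ∫ ζ in s2, fac t l2 c2 ζ * v ζ := by
    rw [integral_congr_ae haeJ, integral_add hIu hIv]
  -- compute ∫ fac2
  have hfac2int : (∫ ζ in s2, fac t l2 c2 ζ) = 1 - Real.exp (-(l2 * t)) := by
    rw [hs2, ← intervalIntegral.integral_of_le hct2.le,
      fac_integral_eq ht hl2 hc2 hct2.le le_rfl,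
      show c2 ^ 2 * t ^ 2 - (c2 * t) ^ 2 = 0 by ring, Real.sqrt_zero, mul_zero, add_zero]
  have hu_int : (∫ ζ in s2, fac t l2 c2 ζ * (1 - E2 ζ))
      = (1 - Real.exp (-(l2 * t))) - ∫ ζ in s2, fac t l2 c2 ζ * E2 ζ := by
    have hrw : (fun ζ => fac t l2 c2 ζ * (1 - E2 ζ))
        = fun ζ => fac t l2 c2 ζ - fac t l2 c2 ζ * E2 ζ := by
      funext ζ; ring
    rw [hrw, integral_sub hIf2 hIE, hfac2int]
  -- ∫ fac2 * E2 = K3 * I3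
  have hE2I3 : (∫ ζ in s2, fac t l2 c2 ζ * E2 ζ)
      = (l2 * Real.exp (-(l1 * t)) * Real.exp (-(l2 * t)) / c2) * I3 := by
    rw [hs2, ← intervalIntegral.integral_of_le hct2.le, hI3,
      ← intervalIntegral.integral_const_mul]
    apply intervalIntegral.integral_congr
    intro ζ hζ
    rw [Set.uIcc_of_le hct2.le] at hζ
    obtain ⟨hζ0, hζ1⟩ := hζ
    show fac t l2 c2 ζ * E2 ζ
        = l2 * Real.exp (-(l1 * t)) * Real.exp (-(l2 * t)) / c2 *
          (ζ / Real.sqrt (c2 ^ 2 * t ^ 2 - ζ ^ 2) *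
            Real.exp ((l2 / c2) * Real.sqrt (c2 ^ 2 * t ^ 2 - ζ ^ 2)) *
            Real.exp ((l1 / c1) * Real.sqrt (c1 ^ 2 * t ^ 2 - (r - ζ) ^ 2)))
    rcases eq_or_lt_of_le hζ0 with h0 | h0
    · rw [← h0]
      have hz : fac t l2 c2 0 = 0 := fac_eq_zero_of_not_mem (by simp)
      simp [hz]
    · rcases eq_or_lt_of_le hζ1 with h1 | h1
      · have hz : fac t l2 c2 ζ = 0 := fac_eq_zero_of_not_mem (by
          simp only [Set.mem_Ioo, not_and, not_lt]; intro _; rw [h1])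
        have hsq : Real.sqrt (c2 ^ 2 * t ^ 2 - ζ ^ 2) = 0 := by
          rw [h1, show c2 ^ 2 * t ^ 2 - (c2 * t) ^ 2 = 0 by ring, Real.sqrt_zero]
        simp [hz, hsq]
      · rw [fac, if_pos ⟨h0, h1⟩, hE2]
        simp only [Real.exp_add]
        ring
  -- ∫ fac2 * v = (1/π) * I4
  have hvI4 : (∫ ζ in s2, fac t l2 c2 ζ * v ζ) = (1 / Real.pi) * I4 := by
    rw [hs2, ← intervalIntegral.integral_of_le hct2.le, hI4,
      ← intervalIntegral.integral_const_mul]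
    apply intervalIntegral.integral_congr
    intro ζ _
    have hvz : v ζ = (1 / Real.pi) *
        ∫ ξ in (r - ζ)..(r + ζ),
          Real.arccos ((ξ ^ 2 + ζ ^ 2 - r ^ 2) / (2 * ξ * ζ)) * fac t l1 c1 ξ := by
      rw [hv, ← intervalIntegral.integral_const_mul]
      apply intervalIntegral.integral_congr
      intro ξ _
      show fac t l1 c1 ξ * pfun r ξ ζ
          = 1 / Real.pi * (Real.arccos ((ξ ^ 2 + ζ ^ 2 - r ^ 2) / (2 * ξ * ζ)) * fac t l1 c1 ξ)
      rw [pfun]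
      ring
    show fac t l2 c2 ζ * v ζ
        = 1 / Real.pi * (fac t l2 c2 ζ *
            ∫ ξ in (r - ζ)..(r + ζ),
              Real.arccos ((ξ ^ 2 + ζ ^ 2 - r ^ 2) / (2 * ξ * ζ)) * fac t l1 c1 ξ)
    rw [hvz]
    ring
  -- final assembly
  rw [hres, hsum, hu_int, hE2I3, hvI4, hJct]
  have hexp : Real.exp (-((l1 + l2) * t)) = Real.exp (-(l1 * t)) * Real.exp (-(l2 * t)) := by
    rw [← Real.exp_add]; ring_nf
  have hexpA : Real.exp (-(l1 * t) + (l1 / c1) * A)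
      = Real.exp (-(l1 * t)) * Real.exp ((l1 / c1) * A) := by
    rw [← Real.exp_add]
  rw [hexp, hexpA]
  ring

instance uniformMeasure_sfinite (s : Set ℝ) : SFinite (uniformMeasure s) := by
  unfold uniformMeasure
  infer_instance

set_option maxHeartbeats 1000000 in
theorem distance_cdf_H1 {Ω : Type*} [MeasureSpace Ω] [IsProbabilityMeasure (ℙ : Measure Ω)]
    (t l1 l2 c1 c2 : ℝ) (ht : 0 < t) (hl1 : 0 < l1) (hl2 : 0 < l2)
    (hc2 : 0 < c2) (hc12 : c2 ≤ c1)
    (R1 R2 Θ : Ω → ℝ) (hmR1 : Measurable R1) (hmR2 : Measurable R2) (hmΘ : Measurable Θ)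
    (hind : iIndepFun ![R1, R2, Θ] ℙ)
    (hR1 : Measure.map R1 ℙ = flightLaw t l1 c1)
    (hR2 : Measure.map R2 ℙ = flightLaw t l2 c2)
    (hΘ : Measure.map Θ ℙ = uniformMeasure (Set.Ioo 0 Real.pi)) (hcc : 2 * c2 < c1)
    (r : ℝ) (hr0 : c2 * t < r) (hr : r ≤ (c1 - c2) * t) :
    ℙ {ω | rho R1 R2 Θ ω < r}
      = ENNReal.ofReal
        (1 - Real.exp (-((l1 + l2) * t)) * Real.exp ((l1 / c1) * Real.sqrt (c1 ^ 2 * t ^ 2 - (r - c2 * t) ^ 2))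
        + l1 * Real.exp (-((l1 + l2) * t)) / (Real.pi * c1) *
          (∫ ξ in (r - c2 * t)..(r + c2 * t),
            Real.arccos ((ξ ^ 2 + (c2 * t) ^ 2 - r ^ 2) / (2 * (c2 * t) * ξ)) *
              (ξ / Real.sqrt (c1 ^ 2 * t ^ 2 - ξ ^ 2)) *
              Real.exp ((l1 / c1) * Real.sqrt (c1 ^ 2 * t ^ 2 - ξ ^ 2)))
        - l2 * Real.exp (-((l1 + l2) * t)) / c2 *
          (∫ ζ in (0:ℝ)..(c2 * t),
            ζ / Real.sqrt (c2 ^ 2 * t ^ 2 - ζ ^ 2) *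
              Real.exp ((l2 / c2) * Real.sqrt (c2 ^ 2 * t ^ 2 - ζ ^ 2)) *
              Real.exp ((l1 / c1) * Real.sqrt (c1 ^ 2 * t ^ 2 - (r - ζ) ^ 2)))
        + (1 / Real.pi) *
          (∫ ζ in (0:ℝ)..(c2 * t), fac t l2 c2 ζ *
            ∫ ξ in (r - ζ)..(r + ζ),
              Real.arccos ((ξ ^ 2 + ζ ^ 2 - r ^ 2) / (2 * ξ * ζ)) * fac t l1 c1 ξ)) := by

  have hc1 : 0 < c1 := lt_of_lt_of_le hc2 hc12
  have hrpos : (0:ℝ) < r := lt_trans (by positivity) hr0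
  set μθ := uniformMeasure (Set.Ioo 0 Real.pi) with hμθ
  -- independence facts
  have hm : ∀ i, Measurable (![R1, R2, Θ] i) := by
    intro i; fin_cases i <;> simpa
  have h12θ : IndepFun (fun ω => (R1 ω, R2 ω)) Θ ℙ := by
    have h := hind.indepFun_prodMk hm 0 1 2 (by decide) (by decide)
    simpa using h
  have h12 : IndepFun R1 R2 ℙ := by
    have h := hind.indepFun (show (0 : Fin 3) ≠ 1 by decide)
    simpa using h
  have hmap12 : Measure.map (fun ω => (R1 ω, R2 ω)) ℙ
      = (flightLaw t l1 c1).prod (flightLaw t l2 c2) := by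
    rw [← hR1, ← hR2]
    exact (indepFun_iff_map_prod_eq_prod_map_map hmR1.aemeasurable hmR2.aemeasurable).mp h12
  have hmapT : Measure.map (fun ω => ((R1 ω, R2 ω), Θ ω)) ℙ
      = ((flightLaw t l1 c1).prod (flightLaw t l2 c2)).prod μθ := by
    rw [← hmap12, ← hΘ]
    exact (indepFun_iff_map_prod_eq_prod_map_map
      (hmR1.prodMk hmR2).aemeasurable hmΘ.aemeasurable).mp h12θ
  -- the event as a preimage
  set S : Set ((ℝ × ℝ) × ℝ) :=
    {p | Real.sqrt (p.1.1 ^ 2 + p.1.2 ^ 2 - 2 * p.1.1 * p.1.2 * Real.cos p.2) < r} with hSdef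
  have hScont : Continuous fun p : (ℝ × ℝ) × ℝ =>
      Real.sqrt (p.1.1 ^ 2 + p.1.2 ^ 2 - 2 * p.1.1 * p.1.2 * Real.cos p.2) := by fun_prop
  have hSm : MeasurableSet S := measurableSet_lt hScont.measurable measurable_const
  have hev : {ω | rho R1 R2 Θ ω < r} = (fun ω => ((R1 ω, R2 ω), Θ ω)) ⁻¹' S := rfl
  rw [hev, ← Measure.map_apply ((hmR1.prodMk hmR2).prodMk hmΘ) hSm, hmapT,
    Measure.prod_apply hSm]
  -- the inner θ-probability
  have hWm : Measurable (fun p : ℝ × ℝ => μθ (Prod.mk p ⁻¹' S)) :=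
    measurable_measure_prodMk_left hSm
  rw [lintegral_prod _ hWm.aemeasurable]
  -- expand the inner integral over the second flight law
  have hinner : ∀ x : ℝ,
      (∫⁻ y, μθ (Prod.mk (x, y) ⁻¹' S) ∂flightLaw t l2 c2)
        = ENNReal.ofReal (Real.exp (-(l2 * t))) * μθ (Prod.mk (x, c2 * t) ⁻¹' S)
          + ∫⁻ y, ENNReal.ofReal (fac t l2 c2 y) * μθ (Prod.mk (x, y) ⁻¹' S) := by
    intro x
    exact flightLaw_lintegral _ (hWm.comp (measurable_const.prodMk measurable_id))
  simp_rw [hinner]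
  -- measurability of pieces
  have mW1 : Measurable (fun x : ℝ => μθ (Prod.mk (x, c2 * t) ⁻¹' S)) :=
    hWm.comp (measurable_id.prodMk measurable_const)
  have mW2 : Measurable (fun x : ℝ =>
      ∫⁻ y, ENNReal.ofReal (fac t l2 c2 y) * μθ (Prod.mk (x, y) ⁻¹' S)) := by
    apply Measurable.lintegral_prod_right
    exact (((measurable_fac t l2 c2).comp measurable_snd).ennreal_ofReal).mul hWm
  rw [flightLaw_lintegral (fun x : ℝ =>
    ENNReal.ofReal (Real.exp (-(l2 * t))) * μθ (Prod.mk (x, c2 * t) ⁻¹' S)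
      + ∫⁻ y, ENNReal.ofReal (fac t l2 c2 y) * μθ (Prod.mk (x, y) ⁻¹' S))
    ((measurable_const.mul mW1).add mW2)]
  -- the two "atom at c1 t" terms vanish
  have haa : μθ (Prod.mk (c1 * t, c2 * t) ⁻¹' S) = 0 := by
    show μθ {θ : ℝ | Real.sqrt ((c1 * t) ^ 2 + (c2 * t) ^ 2
        - 2 * (c1 * t) * (c2 * t) * Real.cos θ) < r} = 0
    rw [hμθ, theta_prob (by positivity) (by positivity) hrpos,
      Real.arccos_eq_zero.mpr, zero_div, ENNReal.ofReal_zero]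
    rw [le_div_iff₀ (by positivity : (0:ℝ) < 2 * (c1 * t) * (c2 * t))]
    nlinarith
  have hza : ∀ y : ℝ,
      ENNReal.ofReal (fac t l2 c2 y) * μθ (Prod.mk (c1 * t, y) ⁻¹' S) = 0 := by
    intro y
    by_cases hy : fac t l2 c2 y = 0
    · rw [hy, ENNReal.ofReal_zero, zero_mul]
    · have hmem : y ∈ Set.Ioo 0 (c2 * t) := by
        by_contra hn; exact hy (fac_eq_zero_of_not_mem hn)
      have hz : μθ (Prod.mk (c1 * t, y) ⁻¹' S) = 0 := by
        show μθ {θ : ℝ | Real.sqrt ((c1 * t) ^ 2 + y ^ 2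
            - 2 * (c1 * t) * y * Real.cos θ) < r} = 0
        rw [hμθ, theta_prob (by positivity) hmem.1 hrpos,
          Real.arccos_eq_zero.mpr, zero_div, ENNReal.ofReal_zero]
        have hy0 : 0 < y := hmem.1
        rw [le_div_iff₀ (by positivity : (0:ℝ) < 2 * (c1 * t) * y)]
        have h1 := hmem.2
        nlinarith
      rw [hz, mul_zero]
  rw [haa, mul_zero, zero_add]
  rw [show (fun y => ENNReal.ofReal (fac t l2 c2 y) * μθ (Prod.mk (c1 * t, y) ⁻¹' S))
      = fun _ : ℝ => (0:ℝ≥0∞) from funext hza, lintegral_zero, mul_zero, zero_add]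
  -- distribute the density integral
  have hdist : ∀ x : ℝ, ENNReal.ofReal (fac t l1 c1 x) *
      (ENNReal.ofReal (Real.exp (-(l2 * t))) * μθ (Prod.mk (x, c2 * t) ⁻¹' S)
        + ∫⁻ y, ENNReal.ofReal (fac t l2 c2 y) * μθ (Prod.mk (x, y) ⁻¹' S))
      = ENNReal.ofReal (Real.exp (-(l2 * t))) *
          (ENNReal.ofReal (fac t l1 c1 x) * μθ (Prod.mk (x, c2 * t) ⁻¹' S))
        + ∫⁻ y, ENNReal.ofReal (fac t l1 c1 x) *
            (ENNReal.ofReal (fac t l2 c2 y) * μθ (Prod.mk (x, y) ⁻¹' S)) := by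
    intro x
    rw [mul_add, ← mul_left_comm, lintegral_const_mul' _ _ ENNReal.ofReal_ne_top]
  simp_rw [hdist]
  rw [lintegral_add_left (by
    exact measurable_const.mul (((measurable_fac t l1 c1).ennreal_ofReal).mul mW1))]
  rw [lintegral_const_mul' _ _ ENNReal.ofReal_ne_top]
  -- first piece: J at c2 t
  have hJ1 : (∫⁻ x, ENNReal.ofReal (fac t l1 c1 x) * μθ (Prod.mk (x, c2 * t) ⁻¹' S))
      = ENNReal.ofReal (Jfun t l1 c1 r (c2 * t)) := by
    rw [hμθ]
    exact lint_J ht hl1 hc1 hrpos (mul_pos hc2 ht)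
  -- second piece: swap and integrate
  have hswap : (∫⁻ x, ∫⁻ y, ENNReal.ofReal (fac t l1 c1 x) *
        (ENNReal.ofReal (fac t l2 c2 y) * μθ (Prod.mk (x, y) ⁻¹' S)))
      = ∫⁻ y, ∫⁻ x, ENNReal.ofReal (fac t l1 c1 x) *
          (ENNReal.ofReal (fac t l2 c2 y) * μθ (Prod.mk (x, y) ⁻¹' S)) := by
    apply lintegral_lintegral_swap
    apply Measurable.aemeasurable
    exact (((measurable_fac t l1 c1).comp measurable_fst).ennreal_ofReal).mul
      ((((measurable_fac t l2 c2).comp measurable_snd).ennreal_ofReal).mul hWm)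
  rw [hswap]
  have hJ2 : ∀ y : ℝ, (∫⁻ x, ENNReal.ofReal (fac t l1 c1 x) *
        (ENNReal.ofReal (fac t l2 c2 y) * μθ (Prod.mk (x, y) ⁻¹' S)))
      = ENNReal.ofReal (fac t l2 c2 y * Jfun t l1 c1 r y) := by
    intro y
    have hre : ∀ x : ℝ, ENNReal.ofReal (fac t l1 c1 x) *
        (ENNReal.ofReal (fac t l2 c2 y) * μθ (Prod.mk (x, y) ⁻¹' S))
        = ENNReal.ofReal (fac t l2 c2 y) *
          (ENNReal.ofReal (fac t l1 c1 x) * μθ (Prod.mk (x, y) ⁻¹' S)) := by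
      intro x; rw [← mul_left_comm]
    simp_rw [hre]
    rw [lintegral_const_mul' _ _ ENNReal.ofReal_ne_top]
    by_cases hy : fac t l2 c2 y = 0
    · rw [hy, ENNReal.ofReal_zero, zero_mul, zero_mul, ENNReal.ofReal_zero]
    · have hmem : y ∈ Set.Ioo 0 (c2 * t) := by
        by_contra hn; exact hy (fac_eq_zero_of_not_mem hn)
      have : (∫⁻ x, ENNReal.ofReal (fac t l1 c1 x) * μθ (Prod.mk (x, y) ⁻¹' S))
          = ENNReal.ofReal (Jfun t l1 c1 r y) := by
        rw [hμθ]
        exact lint_J ht hl1 hc1 hrpos hmem.1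
      rw [this, ← ENNReal.ofReal_mul (fac_nonneg ht hl2 hc2 y)]
  simp_rw [hJ2]
  rw [← ofReal_integral_eq_lintegral_ofReal (facJ_integrable ht hl1 hl2 hc1 hc2)
    (Filter.Eventually.of_forall fun ζ =>
      mul_nonneg (fac_nonneg ht hl2 hc2 ζ) (Jfun_nonneg ht hl1 hc1 r ζ))]
  rw [hJ1, ← ENNReal.ofReal_mul (Real.exp_pos _).le,
    ← ENNReal.ofReal_add (mul_nonneg (Real.exp_pos _).le (Jfun_nonneg ht hl1 hc1 r _))
      (integral_nonneg fun ζ =>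
        mul_nonneg (fac_nonneg ht hl2 hc2 ζ) (Jfun_nonneg ht hl1 hc1 r ζ))]
  rw [key_real t l1 l2 c1 c2 r ht hl1 hl2 hc2 hc12 hr0 hr]
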